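/- Assume in addition 0 < s < 1 < q and let μ > 0. Set θ_μ = C_{q,s}·μ^(q/(q−s)) where C_{q,s} = [s(1−s)/(q(q−s))]^(s/(q−s)) + [s(1−s)/(q(q−s))]^(q/(q−s)), and set Ĉ = (1 + q(q−s)/(s(1−s)))^(−1/q) and ĉ = (1 + s(1−s)/(q(q−s)))^(−1/s). Then for every θ ∈ ℝ one has |θ|^((q+1)/q) ≥ ψ_μ(θ)·θ; moreover ψ_μ(θ)·θ ≥ Ĉ·|θ|^((q+1)/q) whenever |θ| ≥ θ_μ, and ψ_μ(θ)·θ ≥ μ^(−1/s)·ĉ·|θ|^((s+1)/s) whenever |θ| ≤ θ_μ. -/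

import Mathlib

open Real

noncomputable def g (s q μ ζ : ℝ) : ℝ := μ * |ζ| ^ (s - 1) * ζ + |ζ| ^ (q - 1) * ζ

lemma aux14 (s q : ℝ) (hs : 0 < s) (hs1 : s < 1) (hq : 1 < q)
    (μ : ℝ) (hμ : 0 < μ) (ζ θ : ℝ) (hζ : 0 ≤ ζ)
    (hθ : θ = μ * ζ ^ s + ζ ^ q) :
    θ ^ ((q + 1) / q) ≥ ζ * θ ∧
      (((s * (1 - s) / (q * (q - s))) ^ (s / (q - s)) +
          (s * (1 - s) / (q * (q - s))) ^ (q / (q - s))) * μ ^ (q / (q - s)) ≤ θ →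
        ζ * θ ≥ (1 + q * (q - s) / (s * (1 - s))) ^ (-(1 / q)) * θ ^ ((q + 1) / q)) ∧
      (θ ≤ ((s * (1 - s) / (q * (q - s))) ^ (s / (q - s)) +
          (s * (1 - s) / (q * (q - s))) ^ (q / (q - s))) * μ ^ (q / (q - s)) →
        ζ * θ ≥ μ ^ (-(1 / s)) * (1 + s * (1 - s) / (q * (q - s))) ^ (-(1 / s)) *
          θ ^ ((s + 1) / s)) := by
  have h1s : 0 < 1 - s := by linarith
  have hqs : 0 < q - s := by linarith
  have hq0 : 0 < q := by linarith
  set A := s * (1 - s) / (q * (q - s)) with hAdef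
  have hA : 0 < A := div_pos (mul_pos hs h1s) (mul_pos hq0 hqs)
  rcases eq_or_lt_of_le hζ with h0 | hζ'
  · -- ζ = 0
    have hζ0 : ζ = 0 := h0.symm
    subst hζ0
    have hθ0 : θ = 0 := by
      rw [hθ, Real.zero_rpow hs.ne', Real.zero_rpow hq0.ne']; ring
    subst hθ0
    have e1 : ((q + 1) / q : ℝ) ≠ 0 := by positivity
    have e2 : ((s + 1) / s : ℝ) ≠ 0 := by positivity
    refine ⟨?_, fun _ => ?_, fun _ => ?_⟩ <;>
      simp [Real.zero_rpow e1, Real.zero_rpow e2]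
  · -- ζ > 0
    have hθpos : 0 < θ := by
      rw [hθ]; positivity
    have hpow1 : θ ^ ((q + 1) / q) = θ ^ (1 / q) * θ := by
      rw [show (q + 1) / q = 1 / q + 1 by field_simp; ring, Real.rpow_add hθpos,
        Real.rpow_one]
    have hpow2 : θ ^ ((s + 1) / s) = θ ^ (1 / s) * θ := by
      rw [show (s + 1) / s = 1 / s + 1 by field_simp; ring, Real.rpow_add hθpos,
        Real.rpow_one]
    -- part 1
    have hζqθ : ζ ^ q ≤ θ := by
      have := mul_nonneg hμ.le (Real.rpow_nonneg hζ s)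
      rw [hθ]; linarith
    have h1q : ζ ≤ θ ^ (1 / q) := by
      have h := Real.rpow_le_rpow (Real.rpow_nonneg hζ q) hζqθ
        (by positivity : (0:ℝ) ≤ 1 / q)
      rwa [← Real.rpow_mul hζ, mul_one_div_cancel hq0.ne', Real.rpow_one] at h
    have part1 : θ ^ ((q + 1) / q) ≥ ζ * θ := by
      rw [ge_iff_le, hpow1]
      exact mul_le_mul_of_nonneg_right h1q hθpos.le
    -- crossover point
    set ζμ := (A * μ) ^ (1 / (q - s)) with hζμdef
    have hAμ : 0 < A * μ := mul_pos hA hμ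
    have hζμ : 0 < ζμ := Real.rpow_pos_of_pos hAμ _
    have hζμpow : ζμ ^ (q - s) = A * μ := by
      rw [hζμdef, ← Real.rpow_mul hAμ.le, one_div_mul_cancel hqs.ne', Real.rpow_one]
    have hζμs : ζμ ^ s = A ^ (s / (q - s)) * μ ^ (s / (q - s)) := by
      rw [hζμdef, ← Real.rpow_mul hAμ.le, show 1 / (q - s) * s = s / (q - s) by ring,
        Real.mul_rpow hA.le hμ.le]
    have hζμq : ζμ ^ q = A ^ (q / (q - s)) * μ ^ (q / (q - s)) := by
      rw [hζμdef, ← Real.rpow_mul hAμ.le, show 1 / (q - s) * q = q / (q - s) by ring,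
        Real.mul_rpow hA.le hμ.le]
    have hμpow : μ * μ ^ (s / (q - s)) = μ ^ (q / (q - s)) := by
      rw [show q / (q - s) = 1 + s / (q - s) by field_simp; ring, Real.rpow_add hμ,
        Real.rpow_one]
    have hgζμ : μ * ζμ ^ s + ζμ ^ q =
        (A ^ (s / (q - s)) + A ^ (q / (q - s))) * μ ^ (q / (q - s)) := by
      rw [hζμs, hζμq]
      linear_combination A ^ (s / (q - s)) * hμpow
    have hmono : ∀ a b : ℝ, 0 ≤ a → a < b → μ * a ^ s + a ^ q < μ * b ^ s + b ^ q := by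
      intro a b ha hab
      have h1 := Real.rpow_lt_rpow ha hab hs
      have h2 := Real.rpow_lt_rpow ha hab hq0
      nlinarith
    refine ⟨part1, ?_, ?_⟩
    · -- part 2
      intro hx
      have hζμζ : ζμ ≤ ζ := by
        by_contra h
        push_neg at h
        have h2 := hmono ζ ζμ hζ h
        rw [← hθ, hgζμ] at h2
        linarith
      have hAle : A * μ ≤ ζ ^ (q - s) := by
        rw [← hζμpow]
        exact Real.rpow_le_rpow hζμ.le hζμζ hqs.le
      have hkey : (A * μ) * ζ ^ s ≤ ζ ^ q := by
        have h2 : (A * μ) * ζ ^ s ≤ ζ ^ (q - s) * ζ ^ s :=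
          mul_le_mul_of_nonneg_right hAle (Real.rpow_nonneg hζ s)
        rwa [← Real.rpow_add hζ', show q - s + s = q by ring] at h2
      have hAinv : A⁻¹ = q * (q - s) / (s * (1 - s)) := by
        rw [hAdef, inv_div]
      set D := 1 + q * (q - s) / (s * (1 - s)) with hDdef
      have hD : 0 < D := by
        have h7 : 0 < q * (q - s) / (s * (1 - s)) :=
          div_pos (mul_pos hq0 hqs) (mul_pos hs h1s)
        rw [hDdef]; linarith
      have h3 : μ * ζ ^ s ≤ A⁻¹ * ζ ^ q := by
        calc μ * ζ ^ s = A⁻¹ * ((A * μ) * ζ ^ s) := by field_simp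
        _ ≤ A⁻¹ * ζ ^ q := mul_le_mul_of_nonneg_left hkey (inv_nonneg.mpr hA.le)
      have hθle : θ ≤ D * ζ ^ q := by
        rw [hθ, hDdef, ← hAinv, show (1 + A⁻¹) * ζ ^ q = ζ ^ q + A⁻¹ * ζ ^ q by ring]
        linarith
      have h4 : D⁻¹ * θ ≤ ζ ^ q := by
        rw [inv_mul_le_iff₀ hD]
        exact hθle
      have h5 : (D⁻¹ * θ) ^ (1 / q) ≤ ζ := by
        have h := Real.rpow_le_rpow (by positivity) h4 (by positivity : (0:ℝ) ≤ 1 / q)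
        rwa [← Real.rpow_mul hζ, mul_one_div_cancel hq0.ne', Real.rpow_one] at h
      have h6 : (D⁻¹ * θ) ^ (1 / q) = D ^ (-(1 / q)) * θ ^ (1 / q) := by
        rw [Real.mul_rpow (inv_nonneg.mpr hD.le) hθpos.le, Real.inv_rpow hD.le,
          ← Real.rpow_neg hD.le]
      rw [ge_iff_le, hpow1, ← mul_assoc]
      exact mul_le_mul_of_nonneg_right (h6 ▸ h5) hθpos.le
    · -- part 3
      intro hx
      have hζζμ : ζ ≤ ζμ := by
        by_contra h
        push_neg at h
        have h2 := hmono ζμ ζ hζμ.le h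
        rw [← hθ, hgζμ] at h2
        linarith
      have hAle : ζ ^ (q - s) ≤ A * μ := by
        rw [← hζμpow]
        exact Real.rpow_le_rpow hζ hζζμ hqs.le
      have hkey : ζ ^ q ≤ (A * μ) * ζ ^ s := by
        have h2 : ζ ^ (q - s) * ζ ^ s ≤ (A * μ) * ζ ^ s :=
          mul_le_mul_of_nonneg_right hAle (Real.rpow_nonneg hζ s)
        rwa [← Real.rpow_add hζ', show q - s + s = q by ring] at h2
      set E := 1 + A with hEdef
      have hE : 0 < E := by rw [hEdef]; linarith
      have hEμ : 0 < E * μ := mul_pos hE hμ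
      have hθle : θ ≤ (E * μ) * ζ ^ s := by
        rw [hθ, hEdef, show ((1 + A) * μ) * ζ ^ s = μ * ζ ^ s + (A * μ) * ζ ^ s by ring]
        linarith
      have h4 : (E * μ)⁻¹ * θ ≤ ζ ^ s := by
        rw [inv_mul_le_iff₀ hEμ]
        exact hθle
      have h5 : ((E * μ)⁻¹ * θ) ^ (1 / s) ≤ ζ := by
        have h := Real.rpow_le_rpow (by positivity) h4 (by positivity : (0:ℝ) ≤ 1 / s)
        rwa [← Real.rpow_mul hζ, mul_one_div_cancel hs.ne', Real.rpow_one] at h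
      have h6 : ((E * μ)⁻¹ * θ) ^ (1 / s) = μ ^ (-(1 / s)) * E ^ (-(1 / s)) * θ ^ (1 / s) := by
        rw [Real.mul_rpow (inv_nonneg.mpr hEμ.le) hθpos.le, Real.inv_rpow hEμ.le,
          Real.mul_rpow hE.le hμ.le, mul_inv, Real.rpow_neg hμ.le, Real.rpow_neg hE.le]
        ring
      rw [ge_iff_le]
      calc μ ^ (-(1 / s)) * E ^ (-(1 / s)) * θ ^ ((s + 1) / s)
          = (μ ^ (-(1 / s)) * E ^ (-(1 / s)) * θ ^ (1 / s)) * θ := by rw [hpow2]; ring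
        _ ≤ ζ * θ := mul_le_mul_of_nonneg_right (h6 ▸ h5) hθpos.le

theorem stmt_14 (s q : ℝ) (hs : 0 < s) (hs1 : s < 1) (hq : 1 < q)
    (μ : ℝ) (hμ : 0 < μ)
    (ψ : ℝ → ℝ)
    (hψ_right : ∀ θ : ℝ, g s q μ (ψ θ) = θ)
    (hψ_left : ∀ ζ : ℝ, ψ (g s q μ ζ) = ζ) :
    ∀ θ : ℝ,
      |θ| ^ ((q + 1) / q) ≥ ψ θ * θ ∧
      (((s * (1 - s) / (q * (q - s))) ^ (s / (q - s)) +
          (s * (1 - s) / (q * (q - s))) ^ (q / (q - s))) * μ ^ (q / (q - s)) ≤ |θ| →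
        ψ θ * θ ≥ (1 + q * (q - s) / (s * (1 - s))) ^ (-(1 / q)) * |θ| ^ ((q + 1) / q)) ∧
      (|θ| ≤ ((s * (1 - s) / (q * (q - s))) ^ (s / (q - s)) +
          (s * (1 - s) / (q * (q - s))) ^ (q / (q - s))) * μ ^ (q / (q - s)) →
        ψ θ * θ ≥ μ ^ (-(1 / s)) * (1 + s * (1 - s) / (q * (q - s))) ^ (-(1 / s)) *
          |θ| ^ ((s + 1) / s)) := by
  have hgneg : ∀ ζ : ℝ, ζ < 0 → g s q μ ζ < 0 := by
    intro ζ hζ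
    have hne : ζ ≠ 0 := hζ.ne
    have habs : 0 < |ζ| := abs_pos.mpr hne
    have h1 := Real.rpow_pos_of_pos habs (s - 1)
    have h2 := Real.rpow_pos_of_pos habs (q - 1)
    have : g s q μ ζ = (μ * |ζ| ^ (s - 1) + |ζ| ^ (q - 1)) * ζ := by
      unfold g; ring
    rw [this]
    exact mul_neg_of_pos_of_neg (by nlinarith) hζ
  have hsign : ∀ θ : ℝ, 0 ≤ θ → 0 ≤ ψ θ := by
    intro θ hθ
    by_contra h
    push_neg at h
    have := hgneg (ψ θ) h
    rw [hψ_right θ] at this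
    linarith
  have hgodd : ∀ ζ : ℝ, g s q μ (-ζ) = -(g s q μ ζ) := by
    intro ζ
    unfold g
    rw [abs_neg]
    ring
  have hψodd : ∀ θ : ℝ, ψ (-θ) = -(ψ θ) := by
    intro θ
    conv_lhs => rw [← hψ_right θ, ← hgodd, hψ_left]
  have hgeq : ∀ ζ : ℝ, 0 ≤ ζ → g s q μ ζ = μ * ζ ^ s + ζ ^ q := by
    intro ζ hζ
    rcases eq_or_lt_of_le hζ with h0 | h0
    · rw [← h0]
      simp [g, Real.zero_rpow hs.ne', Real.zero_rpow (by linarith : q ≠ 0)]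
    · unfold g
      rw [abs_of_pos h0]
      rw [show μ * ζ ^ (s - 1) * ζ = μ * (ζ ^ (s - 1) * ζ) by ring,
        ← Real.rpow_add_one h0.ne' (s - 1), ← Real.rpow_add_one h0.ne' (q - 1)]
      norm_num
  intro θ
  rcases le_or_gt 0 θ with hθ0 | hθ0
  · have hζ0 : 0 ≤ ψ θ := hsign θ hθ0
    have hθeq : θ = μ * (ψ θ) ^ s + (ψ θ) ^ q := by
      conv_lhs => rw [← hψ_right θ]
      rw [hgeq _ hζ0]
    have h := aux14 s q hs hs1 hq μ hμ (ψ θ) θ hζ0 hθeq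
    rwa [abs_of_nonneg hθ0]
  · have hζ0 : 0 ≤ ψ (-θ) := hsign (-θ) (by linarith)
    have hθeq : -θ = μ * (ψ (-θ)) ^ s + (ψ (-θ)) ^ q := by
      conv_lhs => rw [← hψ_right (-θ)]
      rw [hgeq _ hζ0]
    have h := aux14 s q hs hs1 hq μ hμ (ψ (-θ)) (-θ) hζ0 hθeq
    have hprod : ψ θ * θ = ψ (-θ) * (-θ) := by
      rw [hψodd θ]; ring
    rw [abs_of_neg hθ0, hprod]
    exact h
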